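/- Let k ≥ 1, let q be a unit imaginary quaternion with q ≠ ±i, and let W_{k,q} ⊆ ℍ^k be the real vector subspace of all vectors of the form (a₁ + b₁q + b₂i, a₂ + b₂q + b₃i, …, a_{k−1} + b_{k−1}q + b_k i, a_k + b_k q), where a₁, b₁, …, a_k, b_k are real numbers. Then for every unit imaginary quaternion p with p ≠ q and p ≠ −q, one has W_{k,q} ∩ p•W_{k,q} = 0. -/

import Mathlib

open Quaternion

/-- The quaternion unit `i`. -/
noncomputable def iq : Quaternion ℝ := ⟨0, 1, 0, 0⟩

/-- Componentwise left multiplication by a quaternion `p` on `ℍ^n`, as a real-linear map. -/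
noncomputable def mulLeftLM (n : ℕ) (p : Quaternion ℝ) :
    (Fin n → Quaternion ℝ) →ₗ[ℝ] (Fin n → Quaternion ℝ) :=
  LinearMap.pi fun i => (LinearMap.mulLeft ℝ p).comp (LinearMap.proj i)

/-- The model subspace `W_{k,q} ⊆ ℍ^k` (with `u` the extra imaginary unit, `u = i` when
`q ≠ ±i`): all vectors `(a₁ + b₁q + b₂u, a₂ + b₂q + b₃u, …, a_{k−1} + b_{k−1}q + b_k u,
a_k + b_k q)` with the `a`'s and `b`'s real. -/
noncomputable def WkSub (k : ℕ) (q u : Quaternion ℝ) :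
    Submodule ℝ (Fin k → Quaternion ℝ) where
  carrier := {y | ∃ (a : Fin k → ℝ) (b : ℕ → ℝ), (∀ m, k ≤ m → b m = 0) ∧
    ∀ t : Fin k, y t = ((a t : ℝ) : ℍ[ℝ]) + b t • q + b ((t : ℕ) + 1) • u}
  add_mem' := by
    rintro y y' ⟨a, b, hb, hy⟩ ⟨a', b', hb', hy'⟩
    refine ⟨a + a', fun m => b m + b' m, fun m hm => by simp [hb m hm, hb' m hm], fun t => ?_⟩
    simp only [Pi.add_apply, hy t, hy' t]
    push_cast
    module
  zero_mem' :=
    ⟨0, 0, fun m _ => rfl, fun t => by simp⟩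
  smul_mem' := by
    rintro r y ⟨a, b, hb, hy⟩
    refine ⟨r • a, fun m => r * b m, fun m hm => by simp [hb m hm], fun t => ?_⟩
    simp only [Pi.smul_apply, hy t]
    ext <;> simp <;> ring

/-- A quaternion squaring to `-1` is purely imaginary with unit imaginary norm. -/
lemma pure_of_sq (x : ℍ[ℝ]) (h : x ^ 2 = -1) :
    x.re = 0 ∧ x.imI ^ 2 + x.imJ ^ 2 + x.imK ^ 2 = 1 := by
  rw [pow_two, Quaternion.ext_iff] at h
  simp only [Quaternion.re_mul, Quaternion.imI_mul, Quaternion.imJ_mul, Quaternion.imK_mul,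
    Quaternion.re_neg, Quaternion.imI_neg, Quaternion.imJ_neg, Quaternion.imK_neg,
    Quaternion.re_one, Quaternion.imI_one, Quaternion.imJ_one, Quaternion.imK_one] at h
  obtain ⟨h0, h1, h2, h3⟩ := h
  have hre : x.re = 0 := by
    nlinarith [sq_nonneg x.re, sq_nonneg x.imI, sq_nonneg x.imJ, sq_nonneg x.imK]
  refine ⟨hre, by nlinarith [h0, hre]⟩

/-- The core real-arithmetic lemma: if `a + b q = p (c + d q)` componentwise for unit
imaginary `p, q` with `p ≠ ±q`, then all coefficients vanish. -/
lemma core_real (p1 p2 p3 q1 q2 q3 a b c d : ℝ)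
    (hp : p1 ^ 2 + p2 ^ 2 + p3 ^ 2 = 1) (hq : q1 ^ 2 + q2 ^ 2 + q3 ^ 2 = 1)
    (hne : ¬ (p1 = q1 ∧ p2 = q2 ∧ p3 = q3))
    (hne' : ¬ (p1 = -q1 ∧ p2 = -q2 ∧ p3 = -q3))
    (e0 : a = -(d * (p1 * q1 + p2 * q2 + p3 * q3)))
    (e1 : b * q1 = c * p1 + d * (p2 * q3 - p3 * q2))
    (e2 : b * q2 = c * p2 + d * (p3 * q1 - p1 * q3))
    (e3 : b * q3 = c * p3 + d * (p1 * q2 - p2 * q1)) :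
    a = 0 ∧ b = 0 ∧ c = 0 ∧ d = 0 := by
  set s : ℝ := p1 * q1 + p2 * q2 + p3 * q3 with hs
  set X : ℝ := p2 * q3 - p3 * q2 with hX
  set Y : ℝ := p3 * q1 - p1 * q3 with hY
  set Z : ℝ := p1 * q2 - p2 * q1 with hZ
  have cross : ¬ (X = 0 ∧ Y = 0 ∧ Z = 0) := by
    rintro ⟨x0, y0, z0⟩
    have h1 : p1 = s * q1 := by linear_combination (-p1) * hq + q2 * z0 - q3 * y0
    have h2 : p2 = s * q2 := by linear_combination (-p2) * hq + q3 * x0 - q1 * z0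
    have h3 : p3 = s * q3 := by linear_combination (-p3) * hq + q1 * y0 - q2 * x0
    have hs2 : s ^ 2 = 1 := by
      rw [h1, h2, h3] at hp
      linear_combination hp - s ^ 2 * hq
    have hss : (s - 1) * (s + 1) = 0 := by linear_combination hs2
    rcases mul_eq_zero.mp hss with h | h
    · have h : s = 1 := by linarith
      exact hne ⟨by rw [h1, h, one_mul], by rw [h2, h, one_mul], by rw [h3, h, one_mul]⟩
    · have h : s = -1 := by linarith
      exact hne' ⟨by rw [h1, h]; ring, by rw [h2, h]; ring, by rw [h3, h]; ring⟩
  have hXYZ : X ^ 2 + Y ^ 2 + Z ^ 2 ≠ 0 := by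
    intro h
    exact cross ⟨by nlinarith [sq_nonneg Y, sq_nonneg Z], by nlinarith [sq_nonneg X, sq_nonneg Z],
      by nlinarith [sq_nonneg X, sq_nonneg Y]⟩
  have lagrange : 1 - s ^ 2 = X ^ 2 + Y ^ 2 + Z ^ 2 := by
    linear_combination (-(q1 ^ 2 + q2 ^ 2 + q3 ^ 2)) * hp - hq
  have hbcs : b = c * s := by linear_combination q1 * e1 + q2 * e2 + q3 * e3 - b * hq
  have hcbs : c = b * s := by linear_combination (-(p1 * e1 + p2 * e2 + p3 * e3)) - c * hp
  have hb2 : b * (X ^ 2 + Y ^ 2 + Z ^ 2) = 0 := by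
    rw [← lagrange]; linear_combination hbcs + s * hcbs
  have hb0 : b = 0 := (mul_eq_zero.mp hb2).resolve_right hXYZ
  have hc0 : c = 0 := by rw [hcbs, hb0, zero_mul]
  rw [hb0, hc0] at e1 e2 e3
  have hd1 : d * X = 0 := by linarith
  have hd2 : d * Y = 0 := by linarith
  have hd3 : d * Z = 0 := by linarith
  have hdd : d * (X ^ 2 + Y ^ 2 + Z ^ 2) = 0 := by
    linear_combination X * hd1 + Y * hd2 + Z * hd3
  have hd0 : d = 0 := (mul_eq_zero.mp hdd).resolve_right hXYZ
  exact ⟨by rw [e0, hd0]; ring, hb0, hc0, hd0⟩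

/-- Quaternionic form of the core lemma. -/
lemma core_quat (p q : ℍ[ℝ]) (hpre : p.re = 0) (hqre : q.re = 0)
    (hpn : p.imI ^ 2 + p.imJ ^ 2 + p.imK ^ 2 = 1)
    (hqn : q.imI ^ 2 + q.imJ ^ 2 + q.imK ^ 2 = 1)
    (hpq : p ≠ q) (hpq' : p ≠ -q) (a b c d : ℝ)
    (h : ((a : ℝ) : ℍ[ℝ]) + b • q = p * (((c : ℝ) : ℍ[ℝ]) + d • q)) :
    a = 0 ∧ b = 0 ∧ c = 0 ∧ d = 0 := by
  rw [Quaternion.ext_iff] at h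
  simp only [Quaternion.re_add, Quaternion.imI_add, Quaternion.imJ_add, Quaternion.imK_add,
    Quaternion.re_coe, Quaternion.imI_coe, Quaternion.imJ_coe, Quaternion.imK_coe,
    Quaternion.re_smul, Quaternion.imI_smul, Quaternion.imJ_smul, Quaternion.imK_smul,
    Quaternion.re_mul, Quaternion.imI_mul, Quaternion.imJ_mul, Quaternion.imK_mul,
    hpre, hqre, smul_eq_mul, mul_zero, zero_mul, add_zero, zero_add, sub_zero, zero_sub] at h
  obtain ⟨h0, h1, h2, h3⟩ := h
  have hne : ¬ (p.imI = q.imI ∧ p.imJ = q.imJ ∧ p.imK = q.imK) := by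
    rintro ⟨u1, u2, u3⟩
    exact hpq (Quaternion.ext_iff.mpr ⟨by rw [hpre, hqre], u1, u2, u3⟩)
  have hne' : ¬ (p.imI = -q.imI ∧ p.imJ = -q.imJ ∧ p.imK = -q.imK) := by
    rintro ⟨u1, u2, u3⟩
    refine hpq' (Quaternion.ext_iff.mpr ⟨?_, ?_, ?_, ?_⟩) <;>
      simp [hpre, hqre, u1, u2, u3]
  refine core_real p.imI p.imJ p.imK q.imI q.imJ q.imK a b c d hpn hqn hne hne' ?_ ?_ ?_ ?_ <;>
    linarith [h0, h1, h2, h3]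

/-- For `k ≥ 1` and a unit imaginary quaternion `q ≠ ±i`, the subspace
`W_{k,q} ⊆ ℍ^k` satisfies `W_{k,q} ∩ p•W_{k,q} = 0` for every unit imaginary
quaternion `p` with `p ≠ ±q`. -/
theorem stmt12 (k : ℕ) (hk : 1 ≤ k) (q : Quaternion ℝ) (hq : q ^ 2 = -1)
    (hqi : q ≠ iq) (hqi' : q ≠ -iq)
    (p : Quaternion ℝ) (hp : p ^ 2 = -1) (hpq : p ≠ q) (hpq' : p ≠ -q) :
    WkSub k q iq ⊓ (WkSub k q iq).map (mulLeftLM k p) = ⊥ := by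
  obtain ⟨hqre, hqn⟩ := pure_of_sq q hq
  obtain ⟨hpre, hpn⟩ := pure_of_sq p hp
  rw [eq_bot_iff]
  intro y hy
  rw [Submodule.mem_inf, Submodule.mem_map] at hy
  obtain ⟨⟨a, b, hb, hY⟩, x, ⟨c, d, hd, hX⟩, hxy⟩ := hy
  have hyx : ∀ t : Fin k, y t = p * x t := by
    intro t; rw [← hxy]; rfl
  have eqn : ∀ t : Fin k,
      ((a t : ℝ) : ℍ[ℝ]) + b t • q + b ((t : ℕ) + 1) • iq
        = p * (((c t : ℝ) : ℍ[ℝ]) + d t • q + d ((t : ℕ) + 1) • iq) := by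
    intro t
    rw [← hY t, ← hX t, hyx t]
  -- the per-index step: if the `b`/`d` coefficients one step to the right vanish, everything
  -- at this index vanishes
  have step : ∀ t : Fin k, b ((t : ℕ) + 1) = 0 → d ((t : ℕ) + 1) = 0 →
      a t = 0 ∧ b (t : ℕ) = 0 ∧ c t = 0 ∧ d (t : ℕ) = 0 := by
    intro t h1 h2
    have h := eqn t
    rw [h1, h2] at h
    simp only [zero_smul, add_zero] at h
    exact core_quat p q hpre hqre hpn hqn hpq hpq' _ _ _ _ h
  have key : ∀ n m, k ≤ m + n → b m = 0 ∧ d m = 0 := by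
    intro n
    induction n with
    | zero => exact fun m hm => ⟨hb m (by omega), hd m (by omega)⟩
    | succ n ih =>
      intro m hm
      by_cases hmk : k ≤ m
      · exact ⟨hb m hmk, hd m hmk⟩
      · push_neg at hmk
        obtain ⟨hb1, hd1⟩ := ih (m + 1) (by omega)
        obtain ⟨_, hbm, _, hdm⟩ := step ⟨m, hmk⟩ hb1 hd1
        exact ⟨hbm, hdm⟩
  have hbz : ∀ m, b m = 0 := fun m => (key k m (by omega)).1
  have hdz : ∀ m, d m = 0 := fun m => (key k m (by omega)).2
  funext t
  obtain ⟨haz, _, _, _⟩ := step t (hbz _) (hdz _)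
  rw [hY t, haz, hbz, hbz]
  simp
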